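/- For every integer n ≥ 0 and every real k > 0, the integral ∫₀^∞ xⁿ e^{-k² (log x)²} sin(2π · (log x)/(log q)) dx equals 0, where q = e^{-1/(2k²)}. -/
import Mathlib


open Real MeasureTheory Set

theorem stmt0 (n : ℕ) (k : ℝ) (hk : 0 < k) (q : ℝ) (hq : q = Real.exp (-1 / (2 * k ^ 2))) :
    ∫ x in Ioi (0 : ℝ), x ^ n * Real.exp (-k ^ 2 * Real.log x ^ 2) *
      Real.sin (2 * π * (Real.log x / Real.log q)) = 0 := by
  have hk2 : (0:ℝ) < k ^ 2 := by positivity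
  have hlogq : Real.log q = -1 / (2 * k ^ 2) := by rw [hq, Real.log_exp]
  set a : ℝ := (n + 1) / (2 * k ^ 2) with ha
  -- change of variables x = exp t
  have h1 : (∫ x in Ioi (0 : ℝ), x ^ n * Real.exp (-k ^ 2 * Real.log x ^ 2) *
      Real.sin (2 * π * (Real.log x / Real.log q)))
      = ∫ t : ℝ, |Real.exp t| • (Real.exp t ^ n *
        Real.exp (-k ^ 2 * Real.log (Real.exp t) ^ 2) *
        Real.sin (2 * π * (Real.log (Real.exp t) / Real.log q))) := by
    rw [show Ioi (0:ℝ) = Real.exp '' Set.univ by rw [image_univ, Real.range_exp],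
      integral_image_eq_integral_abs_deriv_smul MeasurableSet.univ
        (fun x _ => (Real.hasDerivAt_exp x).hasDerivWithinAt)
        Real.exp_injective.injOn, Measure.restrict_univ]
  rw [h1]
  -- simplify the integrand
  have h2 : ∀ t : ℝ, |Real.exp t| • (Real.exp t ^ n *
        Real.exp (-k ^ 2 * Real.log (Real.exp t) ^ 2) *
        Real.sin (2 * π * (Real.log (Real.exp t) / Real.log q)))
      = Real.exp ((n + 1) * t - k ^ 2 * t ^ 2) * Real.sin (-(4 * π * k ^ 2) * t) := by
    intro t
    rw [Real.log_exp, abs_of_pos (Real.exp_pos t), smul_eq_mul, ← Real.exp_nat_mul,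
      hlogq]
    have : 2 * π * (t / (-1 / (2 * k ^ 2))) = -(4 * π * k ^ 2) * t := by
      field_simp; ring
    rw [this]
    rw [show Real.exp t * (Real.exp ((n : ℝ) * t) * Real.exp (-k ^ 2 * t ^ 2) *
        Real.sin (-(4 * π * k ^ 2) * t)) = (Real.exp t * Real.exp ((n : ℝ) * t) *
        Real.exp (-k ^ 2 * t ^ 2)) * Real.sin (-(4 * π * k ^ 2) * t) by ring,
      ← Real.exp_add, ← Real.exp_add]
    ring_nf
  simp_rw [h2]
  -- shift t ↦ t + a
  have h3 : (∫ t : ℝ, Real.exp ((n + 1) * t - k ^ 2 * t ^ 2) *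
      Real.sin (-(4 * π * k ^ 2) * t))
      = ∫ t : ℝ, Real.exp ((n + 1) * (t + a) - k ^ 2 * (t + a) ^ 2) *
        Real.sin (-(4 * π * k ^ 2) * (t + a)) := by
    exact (integral_add_right_eq_self
      (fun t : ℝ => Real.exp ((n + 1) * t - k ^ 2 * t ^ 2) *
        Real.sin (-(4 * π * k ^ 2) * t)) a).symm
  rw [h3]
  -- simplify the shifted integrand
  have h4 : ∀ t : ℝ, Real.exp ((n + 1) * (t + a) - k ^ 2 * (t + a) ^ 2) *
        Real.sin (-(4 * π * k ^ 2) * (t + a))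
      = Real.exp ((n + 1) * a - k ^ 2 * a ^ 2) *
        (Real.exp (-k ^ 2 * t ^ 2) * Real.sin (-(4 * π * k ^ 2) * t)) := by
    intro t
    have harg : -(4 * π * k ^ 2) * (t + a)
        = -(4 * π * k ^ 2) * t - (n + 1 : ℤ) * (2 * π) := by
      push_cast
      rw [ha]
      field_simp
      ring
    rw [harg, Real.sin_sub_int_mul_two_pi]
    have hexp : (n + 1) * (t + a) - k ^ 2 * (t + a) ^ 2
        = ((n + 1) * a - k ^ 2 * a ^ 2) + (-k ^ 2 * t ^ 2) := by
      rw [ha]; field_simp; ring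
    rw [hexp, Real.exp_add]
    ring
  simp_rw [h4, integral_const_mul]
  -- the remaining integrand is odd
  have h5 : (∫ t : ℝ, Real.exp (-k ^ 2 * t ^ 2) * Real.sin (-(4 * π * k ^ 2) * t)) = 0 := by
    have hodd : (∫ t : ℝ, Real.exp (-k ^ 2 * t ^ 2) * Real.sin (-(4 * π * k ^ 2) * t))
        = ∫ t : ℝ, -(Real.exp (-k ^ 2 * t ^ 2) * Real.sin (-(4 * π * k ^ 2) * t)) := by
      rw [← integral_neg_eq_self]
      congr 1
      ext t
      rw [show -k ^ 2 * (-t) ^ 2 = -k ^ 2 * t ^ 2 by ring,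
        show -(4 * π * k ^ 2) * (-t) = -(-(4 * π * k ^ 2) * t) by ring, Real.sin_neg]
      ring
    rw [integral_neg] at hodd
    linarith
  rw [h5, mul_zero]
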